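/- Let Ω ⊂ ℝ^m be compact, w a synaptic kernel, f an activation function, and g(δ) = exp(−δ²) the Gaussian learning kernel. Suppose u^γ ∈ C([0,∞); C_b(Ω)) is a global solution of u_t(x,t) = −u(x,t) + ∫_Ω w(x,y)[1 + γ g(u(x,t) − u(y,t))] f(u(y,t)) dy with continuous initial datum. Then for γ sufficiently small the family {u^γ(·,t)}_{t≥0} is equicontinuous in C(Ω), and consequently there exists a sequence of times t₁ < t₂ < …, t_n → ∞, such that u^γ(·,t_n) converges uniformly on Ω to some function u_∞ ∈ C(Ω). -/

import Mathlib

open MeasureTheory Set Filter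
open scoped BoundedContinuousFunction

/-- The Gaussian kernel is 1-Lipschitz. -/
lemma gauss_lip (a b : ℝ) : |Real.exp (-a ^ 2) - Real.exp (-b ^ 2)| ≤ |a - b| := by
  have hlip : LipschitzWith 1 (fun s : ℝ => Real.exp (-s ^ 2)) := by
    have hdiff : Differentiable ℝ (fun s : ℝ => Real.exp (-s ^ 2)) := by
      fun_prop
    refine lipschitzWith_of_nnnorm_deriv_le hdiff fun s => ?_
    have hd : HasDerivAt (fun s : ℝ => Real.exp (-s ^ 2))
        (Real.exp (-s ^ 2) * -(2 * s ^ 1)) s := by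
      have h1 : HasDerivAt (fun s : ℝ => -s ^ 2) (-(2 * s ^ 1)) s := by
        simpa using ((hasDerivAt_pow 2 s).fun_neg)
      exact h1.exp
    have hderiv : deriv (fun s : ℝ => Real.exp (-s ^ 2)) s
        = Real.exp (-s ^ 2) * -(2 * s ^ 1) := hd.deriv
    rw [← NNReal.coe_le_coe]
    push_cast
    rw [hderiv, Real.norm_eq_abs]
    have h2 : (2 : ℝ) * |s| ≤ Real.exp (s ^ 2) := by
      have := Real.add_one_le_exp (s ^ 2)
      nlinarith [sq_nonneg (|s| - 1), sq_abs s]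
    have h3 : |Real.exp (-s ^ 2) * -(2 * s ^ 1)| = Real.exp (-s ^ 2) * (2 * |s|) := by
      rw [abs_mul, abs_neg, abs_of_pos (Real.exp_pos _), abs_mul]
      simp [abs_abs]
    rw [h3]
    have h4 : Real.exp (-s ^ 2) * (2 * |s|) ≤ Real.exp (-s ^ 2) * Real.exp (s ^ 2) :=
      mul_le_mul_of_nonneg_left h2 (Real.exp_pos _).le
    rw [← Real.exp_add] at h4
    simpa using h4
  have := hlip.dist_le_mul a b
  simpa [Real.dist_eq] using this

/-- Dissipative ODE bound. -/
lemma ode_bound {φ R : ℝ → ℝ} {A c : ℝ} (hA : 0 ≤ A) (hc0 : 0 ≤ c) (hc1 : c < 1)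
    (hder : ∀ t ∈ Ici (0:ℝ), HasDerivWithinAt φ (-φ t + R t) (Ici 0) t)
    (hR : ∀ t ∈ Ici (0:ℝ), |R t| ≤ A + c * |φ t|) :
    ∀ t ∈ Ici (0:ℝ), |φ t| ≤ max (|φ 0|) (A / (1 - c)) := by
  set B0 : ℝ := max (|φ 0|) (A / (1 - c)) with hB0def
  have h1c : (0:ℝ) < 1 - c := by linarith
  have hB0nn : 0 ≤ B0 := le_trans (abs_nonneg _) (le_max_left _ _)
  have hAB0 : A ≤ (1 - c) * B0 := by
    have : A / (1 - c) ≤ B0 := le_max_right _ _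
    calc A = (1 - c) * (A / (1 - c)) := by field_simp
    _ ≤ (1 - c) * B0 := by nlinarith
  intro T hT
  have hsq : ∀ ε > (0:ℝ), φ T ^ 2 ≤ B0 ^ 2 + ε := by
    intro ε hε
    have hcont : ContinuousOn φ (Ici 0) := fun t ht => (hder t ht).continuousWithinAt
    have key := image_le_of_deriv_right_lt_deriv_boundary
      (f := fun t => φ t ^ 2) (f' := fun t => 2 * φ t * (-φ t + R t))
      (a := 0) (b := T)
      (B := fun _ => B0 ^ 2 + ε) (B' := fun _ => 0)
      ((hcont.mono Icc_subset_Ici_self).pow 2)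
      (fun t ht => by
        have h := (hder t (mem_Ici.2 ht.1)).mono (Ici_subset_Ici.2 ht.1)
        have := h.fun_pow 2
        refine this.congr_deriv ?_
        push_cast
        ring)
      (by
        have : |φ 0| ≤ B0 := le_max_left _ _
        have h2 : φ 0 ^ 2 ≤ B0 ^ 2 := by nlinarith [sq_abs (φ 0), abs_nonneg (φ 0)]
        show φ 0 ^ 2 ≤ B0 ^ 2 + ε
        linarith)
      (fun t => hasDerivAt_const _ _)
      (fun t ht heq => by
        have heq' : φ t ^ 2 = B0 ^ 2 + ε := heq
        show 2 * φ t * (-φ t + R t) < 0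
        have hRb := hR t (mem_Ici.2 ht.1)
        have habs : φ t * R t ≤ |φ t| * |R t| := by
          calc φ t * R t ≤ |φ t * R t| := le_abs_self _
          _ = |φ t| * |R t| := abs_mul _ _
        have hgt : B0 < |φ t| := by
          nlinarith [sq_abs (φ t), abs_nonneg (φ t)]
        have hpos : 0 < |φ t| := lt_of_le_of_lt hB0nn hgt
        have hA' : A < (1 - c) * |φ t| := by nlinarith
        nlinarith [sq_abs (φ t), abs_nonneg (R t)])
    have := key (right_mem_Icc.2 hT)
    simpa using this
  have hfin : φ T ^ 2 ≤ B0 ^ 2 := le_of_forall_pos_le_add hsq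
  nlinarith [sq_abs (φ T), abs_nonneg (φ T)]

lemma extract_subseq {X : Type*} [MetricSpace X] [CompactSpace X] (v : ℕ → X → ℝ) (M : ℝ)
    (hb : ∀ n x, v n x ∈ Icc (-M) M)
    (heqc : Equicontinuous v) :
    ∃ (ψ : ℕ → ℕ) (L : X → ℝ), StrictMono ψ ∧ Continuous L ∧
      TendstoUniformly (fun n => v (ψ n)) L atTop := by
  let G : ℕ → (X →ᵇ ℝ) := fun n =>
    BoundedContinuousFunction.mkOfCompact ⟨v n, heqc.continuous n⟩
  have hGcoe : ∀ n, ⇑(G n) = v n := fun n => rfl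
  have in_s : ∀ (g : X →ᵇ ℝ) (x : X), g ∈ Set.range G → g x ∈ Icc (-M) M := by
    rintro g x ⟨n, rfl⟩
    exact hb n x
  have HA : Equicontinuous ((↑) : Set.range G → X → ℝ) := by
    intro x₀ U hU
    have h := heqc x₀ U hU
    filter_upwards [h] with x hx
    rintro ⟨g, n, rfl⟩
    exact hx n
  have hcpt : IsCompact (closure (Set.range G)) :=
    BoundedContinuousFunction.arzela_ascoli (Icc (-M) M) isCompact_Icc (Set.range G) in_s HA
  obtain ⟨L, _, ψ, hψmono, hψtend⟩ :=
    hcpt.tendsto_subseq fun n => subset_closure (Set.mem_range_self (f := G) n)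
  refine ⟨ψ, ⇑L, hψmono, L.continuous, ?_⟩
  have h := BoundedContinuousFunction.tendsto_iff_tendstoUniformly.1 hψtend
  exact h

set_option maxHeartbeats 2000000 in
theorem stmt_16 {m : ℕ} (hm : 1 ≤ m)
    (Ω : Set (Fin m → ℝ)) (hΩ_cpt : IsCompact Ω) (hΩ_ne : Ω.Nonempty)
    (w : (Fin m → ℝ) → (Fin m → ℝ) → ℝ)
    (Cinf Cw Kw : ℝ) (hCw : 0 < Cw) (hKw : 0 < Kw)
    (hw_meas : Measurable (Function.uncurry w))
    (hw_bdd : ∀ x y, |w x y| ≤ Cinf)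
    (hw_int : ∀ x, Integrable fun y => w x y)
    (hw_L1 : ∀ x, (∫ y, |w x y|) ≤ Cw)
    (hw_lip : ∀ x x', (∫ y, |w x y - w x' y|) ≤ Kw * ‖x - x'‖)
    (f : ℝ → ℝ)
    (hf_smooth : ContDiff ℝ 1 f) (hf_deriv : ∃ B, ∀ s, |deriv f s| ≤ B)
    (hf_range : ∀ s, 0 ≤ f s ∧ f s ≤ 1) :
    ∃ γ₀ > (0:ℝ), ∀ γ, 0 ≤ γ → γ < γ₀ →
      ∀ (u₀ : (Fin m → ℝ) → ℝ) (u : (Fin m → ℝ) → ℝ → ℝ),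
        ContinuousOn u₀ Ω →
        Measurable (Function.uncurry u) →
        ContinuousOn (fun p : (Fin m → ℝ) × ℝ => u p.1 p.2) (Ω ×ˢ Ici 0) →
        (∃ M, ∀ x ∈ Ω, ∀ t ∈ Ici (0:ℝ), |u x t| ≤ M) →
        (∀ x ∈ Ω, u x 0 = u₀ x) →
        (∀ x ∈ Ω, ∀ t ∈ Ici (0:ℝ),
          HasDerivWithinAt (u x)
            (-(u x t) + ∫ y in Ω,
              w x y * (1 + γ * Real.exp (-(u x t - u y t) ^ 2)) * f (u y t))
            (Ici 0) t) →
        Equicontinuous (fun t : Ici (0:ℝ) => fun x : Ω => u x.1 t.1) ∧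
        ∃ (ts : ℕ → ℝ) (uInf : Ω → ℝ),
          StrictMono ts ∧ (∀ n, 0 ≤ ts n) ∧
          Tendsto ts atTop atTop ∧
          Continuous uInf ∧
          TendstoUniformly (fun n => fun x : Ω => u x.1 (ts n)) uInf atTop := by
  refine ⟨min 1 (1 / (2 * Cw)), by positivity, ?_⟩
  intro γ hγ0 hγlt u₀ u hu₀c hu_meas hu_cont hbdd hu_init hu_ode
  obtain ⟨M, hM⟩ := hbdd
  have hγ1 : γ ≤ 1 := le_of_lt (lt_of_lt_of_le hγlt (min_le_left _ _))
  have hc : γ * Cw < 1 / 2 := by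
    have h1 : γ < 1 / (2 * Cw) := lt_of_lt_of_le hγlt (min_le_right _ _)
    have h2 : γ * Cw < (1 / (2 * Cw)) * Cw := mul_lt_mul_of_pos_right h1 hCw
    have h3 : (1 / (2 * Cw)) * Cw = 1 / 2 := by field_simp
    linarith
  have hc0 : 0 ≤ γ * Cw := by positivity
  have hc1 : γ * Cw < 1 := by linarith
  -- measurability of slices
  have hvmeas : ∀ t : ℝ, Measurable fun y => u y t := fun t =>
    hu_meas.comp (measurable_id.prodMk measurable_const)
  have hfmeas : Measurable f := hf_smooth.continuous.measurable
  -- integrability of the RHS integrand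
  have hint : ∀ (z : Fin m → ℝ) (t : ℝ),
      IntegrableOn (fun y => w z y * (1 + γ * Real.exp (-(u z t - u y t) ^ 2)) * f (u y t)) Ω := by
    intro z t
    have heq : (fun y => w z y * (1 + γ * Real.exp (-(u z t - u y t) ^ 2)) * f (u y t))
        = fun y => ((1 + γ * Real.exp (-(u z t - u y t) ^ 2)) * f (u y t)) * w z y := by
      funext y; ring
    rw [heq]
    refine Integrable.bdd_mul ((hw_int z).restrict) ?_ (c := 1 + γ) (Filter.Eventually.of_forall fun y => ?_)
    · have h2 : Measurable fun y => Real.exp (-(u z t - u y t) ^ 2) :=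
        Real.measurable_exp.comp (((measurable_const.sub (hvmeas t)).pow_const 2).neg)
      exact ((measurable_const.add (h2.const_mul γ)).mul
        (hfmeas.comp (hvmeas t))).aestronglyMeasurable
    · have he1 : Real.exp (-(u z t - u y t) ^ 2) ≤ 1 :=
        Real.exp_le_one_iff.2 (neg_nonpos.2 (sq_nonneg _))
      have he0 : 0 < Real.exp (-(u z t - u y t) ^ 2) := Real.exp_pos _
      have hf0 := (hf_range (u y t)).1
      have hf1 := (hf_range (u y t)).2
      rw [Real.norm_eq_abs, abs_mul]
      have ha1 : |1 + γ * Real.exp (-(u z t - u y t) ^ 2)| ≤ 1 + γ := by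
        rw [abs_of_nonneg (by nlinarith)]; nlinarith
      have ha2 : |f (u y t)| ≤ 1 := by rw [abs_of_nonneg hf0]; exact hf1
      calc |1 + γ * Real.exp (-(u z t - u y t) ^ 2)| * |f (u y t)|
          ≤ (1 + γ) * 1 := by
            apply mul_le_mul ha1 ha2 (abs_nonneg _) (by linarith)
        _ = 1 + γ := mul_one _
  -- the key uniform estimate
  have key : ∀ x ∈ Ω, ∀ x' ∈ Ω, ∀ t ∈ Ici (0:ℝ),
      |u x t - u x' t| ≤ max (|u₀ x - u₀ x'|) (4 * (Kw * ‖x - x'‖)) := by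
    intro x hx x' hx'
    have hAnn : (0:ℝ) ≤ 2 * (Kw * ‖x - x'‖) := by positivity
    have hiΔfull : Integrable (fun y => |w x y - w x' y|) := by
      simpa using ((hw_int x).sub (hw_int x')).abs
    have hiWfull : Integrable (fun y => |w x' y|) := (hw_int x').abs
    have hbound := ode_bound (φ := fun t => u x t - u x' t)
      (R := fun t =>
        (∫ y in Ω, w x y * (1 + γ * Real.exp (-(u x t - u y t) ^ 2)) * f (u y t)) -
        (∫ y in Ω, w x' y * (1 + γ * Real.exp (-(u x' t - u y t) ^ 2)) * f (u y t)))
      (A := 2 * (Kw * ‖x - x'‖)) (c := γ * Cw) hAnn hc0 hc1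
      (fun t ht => by
        have h := (hu_ode x hx t ht).fun_sub (hu_ode x' hx' t ht)
        refine h.congr_deriv ?_
        ring)
      (fun t ht => by
        show |(∫ y in Ω, w x y * (1 + γ * Real.exp (-(u x t - u y t) ^ 2)) * f (u y t)) -
          (∫ y in Ω, w x' y * (1 + γ * Real.exp (-(u x' t - u y t) ^ 2)) * f (u y t))|
          ≤ 2 * (Kw * ‖x - x'‖) + γ * Cw * |u x t - u x' t|
        rw [← integral_sub (hint x t) (hint x' t)]
        have hi1 : Integrable (fun y => 2 * |w x y - w x' y|) (volume.restrict Ω) :=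
          hiΔfull.restrict.const_mul 2
        have hi2 : Integrable (fun y => (γ * |u x t - u x' t|) * |w x' y|)
            (volume.restrict Ω) := hiWfull.restrict.const_mul _
        have hbd : Integrable (fun y =>
            2 * |w x y - w x' y| + (γ * |u x t - u x' t|) * |w x' y|)
            (volume.restrict Ω) := hi1.add hi2
        have hptw : ∀ y,
            ‖w x y * (1 + γ * Real.exp (-(u x t - u y t) ^ 2)) * f (u y t) -
             w x' y * (1 + γ * Real.exp (-(u x' t - u y t) ^ 2)) * f (u y t)‖
            ≤ 2 * |w x y - w x' y| + (γ * |u x t - u x' t|) * |w x' y| := by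
          intro y
          set ex := Real.exp (-(u x t - u y t) ^ 2) with hex
          set ex' := Real.exp (-(u x' t - u y t) ^ 2) with hex'
          have hdecomp : w x y * (1 + γ * ex) * f (u y t) - w x' y * (1 + γ * ex') * f (u y t)
              = (w x y - w x' y) * ((1 + γ * ex) * f (u y t))
                + w x' y * ((γ * (ex - ex')) * f (u y t)) := by ring
          rw [Real.norm_eq_abs, hdecomp]
          have he1 : ex ≤ 1 := Real.exp_le_one_iff.2 (neg_nonpos.2 (sq_nonneg _))
          have he0 : 0 < ex := Real.exp_pos _
          have hf0 := (hf_range (u y t)).1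
          have hf1 := (hf_range (u y t)).2
          have hlip : |ex - ex'| ≤ |u x t - u x' t| := by
            have := gauss_lip (u x t - u y t) (u x' t - u y t)
            rw [← hex, ← hex'] at this
            convert this using 2
            ring
          calc |(w x y - w x' y) * ((1 + γ * ex) * f (u y t))
                + w x' y * ((γ * (ex - ex')) * f (u y t))|
              ≤ |(w x y - w x' y) * ((1 + γ * ex) * f (u y t))|
                + |w x' y * ((γ * (ex - ex')) * f (u y t))| := abs_add_le _ _
            _ = |w x y - w x' y| * (|1 + γ * ex| * |f (u y t)|)
                + |w x' y| * ((γ * |ex - ex'|) * |f (u y t)|) := by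
                simp only [abs_mul, abs_of_nonneg hγ0]
            _ ≤ |w x y - w x' y| * ((1 + γ) * 1)
                + |w x' y| * ((γ * |u x t - u x' t|) * 1) := by
                gcongr
                · rw [abs_of_nonneg (by nlinarith)]; nlinarith
                · rw [abs_of_nonneg hf0]; exact hf1
                · rw [abs_of_nonneg hf0]; exact hf1
            _ ≤ 2 * |w x y - w x' y| + (γ * |u x t - u x' t|) * |w x' y| := by
                have := abs_nonneg (w x y - w x' y)
                have := abs_nonneg (w x' y)
                nlinarith
        have h1 := norm_integral_le_of_norm_le hbd (Filter.Eventually.of_forall hptw)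
        rw [Real.norm_eq_abs] at h1
        refine h1.trans ?_
        rw [integral_add hi1 hi2, integral_const_mul, integral_const_mul]
        have hI1 : (∫ y in Ω, |w x y - w x' y|) ≤ Kw * ‖x - x'‖ :=
          (setIntegral_le_integral hiΔfull
            (Filter.Eventually.of_forall fun y => abs_nonneg _)).trans (hw_lip x x')
        have hI2 : (∫ y in Ω, |w x' y|) ≤ Cw :=
          (setIntegral_le_integral hiWfull
            (Filter.Eventually.of_forall fun y => abs_nonneg _)).trans (hw_L1 x')
        have hI1' : (0:ℝ) ≤ ∫ y in Ω, |w x y - w x' y| :=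
          integral_nonneg fun y => abs_nonneg _
        have hI2' : (0:ℝ) ≤ ∫ y in Ω, |w x' y| := integral_nonneg fun y => abs_nonneg _
        have hφnn : (0:ℝ) ≤ γ * |u x t - u x' t| := by positivity
        nlinarith [abs_nonneg (u x t - u x' t)])
    intro t ht
    have h := hbound t ht
    have h0 : u x 0 - u x' 0 = u₀ x - u₀ x' := by rw [hu_init x hx, hu_init x' hx']
    refine h.trans (max_le_max (le_of_eq ?_) ?_)
    · show |u x 0 - u x' 0| = _
      rw [h0]
    · rw [div_le_iff₀ (by linarith : (0:ℝ) < 1 - γ * Cw)]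
      nlinarith [norm_nonneg (x - x'), mul_nonneg (mul_nonneg hKw.le (norm_nonneg (x - x'))) hc0]
  -- equicontinuity
  have hucont := Metric.uniformContinuousOn_iff.1
    (hΩ_cpt.uniformContinuousOn_of_continuous hu₀c)
  have hEq : Equicontinuous (fun t : Ici (0:ℝ) => fun x : Ω => u x.1 t.1) := by
    intro x₀
    rw [Metric.equicontinuousAt_iff]
    intro ε hε
    obtain ⟨δ₁, hδ₁, hδ₁'⟩ := hucont (ε / 2) (by linarith)
    set δ₂ : ℝ := ε / (8 * (Kw + 1)) with hδ₂def
    have hδ₂ : 0 < δ₂ := by positivity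
    refine ⟨min δ₁ δ₂, lt_min hδ₁ hδ₂, fun x hx i => ?_⟩
    have hdist : dist x.1 x₀.1 < min δ₁ δ₂ := by rwa [← Subtype.dist_eq]
    have h1 : |u₀ x₀.1 - u₀ x.1| < ε / 2 := by
      have := hδ₁' x₀.1 x₀.2 x.1 x.2 (by
        rw [dist_comm] at hdist
        exact lt_of_lt_of_le hdist (min_le_left _ _))
      rwa [Real.dist_eq] at this
    have h2 : 4 * (Kw * ‖x₀.1 - x.1‖) < ε / 2 := by
      have hn : ‖x₀.1 - x.1‖ < δ₂ := by
        rw [← dist_eq_norm, dist_comm]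
        exact lt_of_lt_of_le hdist (min_le_right _ _)
      have h3 : 4 * (Kw * ‖x₀.1 - x.1‖) ≤ 4 * ((Kw + 1) * ‖x₀.1 - x.1‖) := by
        nlinarith [norm_nonneg (x₀.1 - x.1)]
      have h4 : 4 * ((Kw + 1) * ‖x₀.1 - x.1‖) < 4 * ((Kw + 1) * δ₂) := by
        have hKw1 : (0:ℝ) < Kw + 1 := by linarith
        exact mul_lt_mul_of_pos_left (mul_lt_mul_of_pos_left hn hKw1) (by norm_num)
      have h5 : 4 * ((Kw + 1) * δ₂) = ε / 2 := by
        rw [hδ₂def]; field_simp; ring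
      linarith
    have hkey := key x₀.1 x₀.2 x.1 x.2 i.1 i.2
    rw [Real.dist_eq]
    calc |u x₀.1 i.1 - u x.1 i.1| ≤ _ := hkey
      _ < ε := lt_trans (max_lt h1 h2) (by linarith)
  refine ⟨hEq, ?_⟩
  -- Arzelà–Ascoli extraction
  have : CompactSpace Ω := isCompact_iff_compactSpace.mp hΩ_cpt
  have hbmem : ∀ (n : ℕ) (x : Ω), u x.1 (n : ℝ) ∈ Icc (-M) M := fun n x => by
    have := abs_le.1 (hM x.1 x.2 (n : ℝ) (mem_Ici.2 (Nat.cast_nonneg n)))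
    exact ⟨this.1, this.2⟩
  have heqv : Equicontinuous (fun n : ℕ => fun x : Ω => u x.1 (n : ℝ)) := by
    intro x₀ U hU
    filter_upwards [hEq x₀ U hU] with x hx n
    exact hx ⟨(n : ℝ), mem_Ici.2 (Nat.cast_nonneg n)⟩
  obtain ⟨ψ, L, hψmono, hLcont, hunif⟩ :=
    extract_subseq (fun n (x : Ω) => u x.1 (n : ℝ)) M hbmem heqv
  exact ⟨fun n => (ψ n : ℝ), L, fun a b h => Nat.cast_lt.2 (hψmono h),
    fun n => Nat.cast_nonneg _, tendsto_natCast_atTop_atTop.comp hψmono.tendsto_atTop,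
    hLcont, hunif⟩
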